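/- arXiv:math/0610873 — 5 statements merged into one kernel-verified Lean document; each statement's English description precedes it below -/
import Mathlib

section
/- Let $z_1,z_2,z_3,z_4$ be integers and define $\psi(z_1,z_2,z_3,z_4)=\max(0,\,z_1,\,z_1+z_2,\,z_1+z_2+3z_4,\,z_1+z_2+z_3+3z_4,\,2z_1+z_2+z_3+3z_4)+2\max(z_3+\max(z_2,0),0)+\max(3z_4,0)-(z_1+z_2+2z_3+3z_4)$. Then $\psi(z_1,z_2,z_3,z_4)\ge 0$, and $\psi(z_1,z_2,z_3,z_4)=0$ if and only if $(z_1,z_2,z_3,z_4)=(0,0,0,0)$. -/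
/-- The function `ψ(z₁,z₂,z₃,z₄)` arising as `⟨c,φ(b)⟩ - l` for elements of the
level-`l` perfect crystal `B_l` for `D₄⁽³⁾`. -/
def psi (z1 z2 z3 z4 : ℤ) : ℤ :=
  max (max (max (max (max 0 z1) (z1 + z2)) (z1 + z2 + 3 * z4))
        (z1 + z2 + z3 + 3 * z4)) (2 * z1 + z2 + z3 + 3 * z4)
    + 2 * max (z3 + max z2 0) 0 + max (3 * z4) 0
    - (z1 + z2 + 2 * z3 + 3 * z4)

theorem psi_nonneg_and_eq_zero_iff (z1 z2 z3 z4 : ℤ) :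
    0 ≤ psi z1 z2 z3 z4 ∧
      (psi z1 z2 z3 z4 = 0 ↔ z1 = 0 ∧ z2 = 0 ∧ z3 = 0 ∧ z4 = 0) := by
  unfold psi; constructor <;> omega
end

section
/- For every positive integer $l$, $\sum_{i=0}^{\lfloor l/2\rfloor} \sum_{\substack{i\le j_0,j_1\le l-i \\ j_0\equiv j_1\equiv l-i \pmod 3}} \frac{(1+j_0)(1+j_1)(2+j_0+j_1)}{2} = \frac{(l+1)(l+2)(l+3)^2(l+4)(l+5)}{360}$. -/
open Finset


private def Phi (c n : ℚ) : ℚ :=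
  (n*c + 3*n*(n-1)/2) * (n*c^2 + 3*n*(n-1)*c + 3*n*(n-1)*(2*n-1)/2)

private def A (l i : ℕ) : ℚ :=
  ∑ j0 ∈ (Finset.Icc i (l - i)).filter (fun j0 => j0 % 3 = (l - i) % 3),
    ∑ j1 ∈ (Finset.Icc i (l - i)).filter (fun j1 => j1 % 3 = (l - i) % 3),
      ((1 + j0) * (1 + j1) * (2 + j0 + j1) : ℚ) / 2

private lemma a2c_sum_lin (c : ℚ) (n : ℕ) :
    ∑ k ∈ Finset.range n, (c + 3*(k:ℚ)) = n*c + 3*n*(n-1)/2 := by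
  induction n with
  | zero => simp
  | succ m ih => rw [Finset.sum_range_succ, ih]; push_cast; ring

private lemma a2c_sum_sq (c : ℚ) (n : ℕ) :
    ∑ k ∈ Finset.range n, (c + 3*(k:ℚ))^2
      = n*c^2 + 3*n*(n-1)*c + 3*n*(n-1)*(2*n-1)/2 := by
  induction n with
  | zero => simp
  | succ m ih => rw [Finset.sum_range_succ, ih]; push_cast; ring

private lemma a2c_dbl (c : ℚ) (n : ℕ) :
    ∑ k0 ∈ Finset.range n, ∑ k1 ∈ Finset.range n,
      ((c + 3*(k0:ℚ)) * (c + 3*(k1:ℚ)) * ((c + 3*(k0:ℚ)) + (c + 3*(k1:ℚ)))) / 2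
    = Phi c n := by
  have key : ∀ k0 : ℕ,
      ∑ k1 ∈ Finset.range n,
        ((c + 3*(k0:ℚ)) * (c + 3*(k1:ℚ)) * ((c + 3*(k0:ℚ)) + (c + 3*(k1:ℚ)))) / 2
      = (c + 3*(k0:ℚ))^2 * ((n*c + 3*n*(n-1)/2)/2)
        + (c + 3*(k0:ℚ)) * ((n*c^2 + 3*n*(n-1)*c + 3*n*(n-1)*(2*n-1)/2)/2) := by
    intro k0
    have e : ∀ k1 : ℕ,
        ((c + 3*(k0:ℚ)) * (c + 3*(k1:ℚ)) * ((c + 3*(k0:ℚ)) + (c + 3*(k1:ℚ)))) / 2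
        = (c + 3*(k0:ℚ))^2/2 * (c + 3*(k1:ℚ)) + (c + 3*(k0:ℚ))/2 * (c + 3*(k1:ℚ))^2 :=
      fun k1 => by ring
    simp only [e]
    rw [Finset.sum_add_distrib, ← Finset.mul_sum, ← Finset.mul_sum,
      a2c_sum_lin, a2c_sum_sq]
    ring
  calc ∑ k0 ∈ Finset.range n, ∑ k1 ∈ Finset.range n,
        ((c + 3*(k0:ℚ)) * (c + 3*(k1:ℚ)) * ((c + 3*(k0:ℚ)) + (c + 3*(k1:ℚ)))) / 2
      = ∑ k0 ∈ Finset.range n,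
          ((c + 3*(k0:ℚ))^2 * ((n*c + 3*n*(n-1)/2)/2)
            + (c + 3*(k0:ℚ)) * ((n*c^2 + 3*n*(n-1)*c + 3*n*(n-1)*(2*n-1)/2)/2)) :=
        Finset.sum_congr rfl fun k0 _ => key k0
    _ = Phi c n := by
        rw [Finset.sum_add_distrib, ← Finset.sum_mul, ← Finset.sum_mul,
          a2c_sum_lin, a2c_sum_sq]
        simp only [Phi]; ring

private lemma a2c_filter_eq (l i N r : ℕ) (hr : r < 3) (hm : l - i = i + 3*N + r) :
    (Finset.Icc i (l - i)).filter (fun j => j % 3 = (l - i) % 3)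
      = (Finset.range (N+1)).image (fun k => i + r + 3*k) := by
  ext j
  simp only [Finset.mem_filter, Finset.mem_Icc, Finset.mem_image, Finset.mem_range]
  constructor
  · rintro ⟨⟨h1, h2⟩, h3⟩
    exact ⟨(j - i - r)/3, by omega, by omega⟩
  · rintro ⟨k, hk, rfl⟩
    omega

private lemma A_val (l i N r : ℕ) (hr : r < 3) (hm : l - i = i + 3*N + r) :
    A l i = Phi (1 + (i:ℚ) + (r:ℚ)) ((N:ℚ) + 1) := by
  have hinj : ∀ x ∈ Finset.range (N+1), ∀ y ∈ Finset.range (N+1),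
      i + r + 3*x = i + r + 3*y → x = y := fun x _ y _ h => by omega
  have key : A l i = ∑ k0 ∈ Finset.range (N+1), ∑ k1 ∈ Finset.range (N+1),
      (((1 + (i:ℚ) + (r:ℚ)) + 3*(k0:ℚ)) * ((1 + (i:ℚ) + (r:ℚ)) + 3*(k1:ℚ)) *
        (((1 + (i:ℚ) + (r:ℚ)) + 3*(k0:ℚ)) + ((1 + (i:ℚ) + (r:ℚ)) + 3*(k1:ℚ)))) / 2 := by
    unfold A
    rw [a2c_filter_eq l i N r hr hm]
    rw [Finset.sum_image hinj]
    refine Finset.sum_congr rfl fun k0 _ => ?_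
    rw [Finset.sum_image hinj]
    refine Finset.sum_congr rfl fun k1 _ => ?_
    push_cast; ring
  rw [key, a2c_dbl]
  push_cast
  ring

private lemma a2c_trip (f : ℕ → ℚ) : ∀ N : ℕ,
    ∑ i ∈ Finset.range (3*N), f i
      = ∑ u ∈ Finset.range N, (f (3*u) + f (3*u+1) + f (3*u+2)) := by
  intro N
  induction N with
  | zero => simp
  | succ m ih =>
      rw [show 3*(m+1) = 3*m+1+1+1 from by omega, Finset.sum_range_succ,
        Finset.sum_range_succ, Finset.sum_range_succ, ih, Finset.sum_range_succ,
        show 3*m+1+1 = 3*m+2 from by omega]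
      ring

private def Cp0 (Q n : ℚ) : ℚ := 108*Q^3*n^3 + 162*Q^3*n^2 + 108*Q^3*n + 162*Q^2*n^3 + 189*Q^2*n^2 + 108*Q^2*n + (108/5)*Q*n^5 + 54*Q*n^4 + 150*Q*n^3 + 117*Q*n^2 + (222/5)*Q*n + (54/5)*n^5 + 21*n^4 + 36*n^3 + (47/2)*n^2 + (67/10)*n

private lemma a2c_sum0 (Q : ℚ) : ∀ n : ℕ,
    ∑ w ∈ Finset.range n,
      (Phi (3*Q - 3*(w:ℚ) - 2) (2*(w:ℚ) + 3) + Phi (3*Q - 3*(w:ℚ)) (2*(w:ℚ) + 2) + Phi (3*Q - 3*(w:ℚ) + 2) (2*(w:ℚ) + 1))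
    = Cp0 Q n := by
  intro n
  induction n with
  | zero => simp only [Finset.range_zero, Finset.sum_empty, Nat.cast_zero, Cp0]; ring
  | succ m ih =>
      rw [Finset.sum_range_succ, ih]
      simp only [Cp0, Phi]
      push_cast
      ring

private lemma a2c_row0 (q w : ℕ) (hw : w < q) :
    A (6*q+0) (3*(q-1-w)) + A (6*q+0) (3*(q-1-w)+1) + A (6*q+0) (3*(q-1-w)+2)
    = Phi (3*(q:ℚ) - 3*(w:ℚ) - 2) (2*(w:ℚ) + 3) + Phi (3*(q:ℚ) - 3*(w:ℚ)) (2*(w:ℚ) + 2) + Phi (3*(q:ℚ) - 3*(w:ℚ) + 2) (2*(w:ℚ) + 1) := by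
  rw [A_val (6*q+0) (3*(q-1-w)) (2*w+2) 0 (by norm_num) (by omega), A_val (6*q+0) (3*(q-1-w)+1) (2*w+1) 1 (by norm_num) (by omega), A_val (6*q+0) (3*(q-1-w)+2) (2*w+0) 2 (by norm_num) (by omega)]
  have hq : ((q - 1 - w : ℕ) : ℚ) = (q:ℚ) - 1 - (w:ℚ) := by
    have h1 : q - 1 - w = q - (w+1) := by omega
    rw [h1, Nat.cast_sub (by omega : w+1 ≤ q)]
    push_cast; ring
  simp only [Phi]
  push_cast [hq]
  ring

private lemma a2c_blk0 (q : ℕ) :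
    ∑ i ∈ Finset.range (3*q), A (6*q+0) i = Cp0 (q:ℚ) (q:ℚ) := by
  refine Eq.trans ?_ (a2c_sum0 (q:ℚ) q)
  rw [a2c_trip, ← Finset.sum_range_reflect]
  exact Finset.sum_congr rfl fun w hw => a2c_row0 q w (Finset.mem_range.mp hw)

private def Cp1 (Q n : ℚ) : ℚ := 108*Q^3*n^3 + 216*Q^3*n^2 + 135*Q^3*n + 216*Q^2*n^3 + 432*Q^2*n^2 + 270*Q^2*n + (108/5)*Q*n^5 + 72*Q*n^4 + 231*Q*n^3 + 333*Q*n^2 + (942/5)*Q*n + (72/5)*n^5 + 48*n^4 + 90*n^3 + 94*n^2 + (228/5)*n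

private lemma a2c_sum1 (Q : ℚ) : ∀ n : ℕ,
    ∑ w ∈ Finset.range n,
      (Phi (3*Q - 3*(w:ℚ) - 1) (2*(w:ℚ) + 3) + Phi (3*Q - 3*(w:ℚ) + 1) (2*(w:ℚ) + 2) + Phi (3*Q - 3*(w:ℚ)) (2*(w:ℚ) + 2))
    = Cp1 Q n := by
  intro n
  induction n with
  | zero => simp only [Finset.range_zero, Finset.sum_empty, Nat.cast_zero, Cp1]; ring
  | succ m ih =>
      rw [Finset.sum_range_succ, ih]
      simp only [Cp1, Phi]
      push_cast
      ring

private lemma a2c_row1 (q w : ℕ) (hw : w < q) :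
    A (6*q+1) (3*(q-1-w)) + A (6*q+1) (3*(q-1-w)+1) + A (6*q+1) (3*(q-1-w)+2)
    = Phi (3*(q:ℚ) - 3*(w:ℚ) - 1) (2*(w:ℚ) + 3) + Phi (3*(q:ℚ) - 3*(w:ℚ) + 1) (2*(w:ℚ) + 2) + Phi (3*(q:ℚ) - 3*(w:ℚ)) (2*(w:ℚ) + 2) := by
  rw [A_val (6*q+1) (3*(q-1-w)) (2*w+2) 1 (by norm_num) (by omega), A_val (6*q+1) (3*(q-1-w)+1) (2*w+1) 2 (by norm_num) (by omega), A_val (6*q+1) (3*(q-1-w)+2) (2*w+1) 0 (by norm_num) (by omega)]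
  have hq : ((q - 1 - w : ℕ) : ℚ) = (q:ℚ) - 1 - (w:ℚ) := by
    have h1 : q - 1 - w = q - (w+1) := by omega
    rw [h1, Nat.cast_sub (by omega : w+1 ≤ q)]
    push_cast; ring
  simp only [Phi]
  push_cast [hq]
  ring

private lemma a2c_blk1 (q : ℕ) :
    ∑ i ∈ Finset.range (3*q), A (6*q+1) i = Cp1 (q:ℚ) (q:ℚ) := by
  refine Eq.trans ?_ (a2c_sum1 (q:ℚ) q)
  rw [a2c_trip, ← Finset.sum_range_reflect]
  exact Finset.sum_congr rfl fun w hw => a2c_row1 q w (Finset.mem_range.mp hw)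

private def Cp2 (Q n : ℚ) : ℚ := 108*Q^3*n^3 + 270*Q^3*n^2 + 216*Q^3*n + 270*Q^2*n^3 + 675*Q^2*n^2 + 540*Q^2*n + (108/5)*Q*n^5 + 90*Q*n^4 + 366*Q*n^3 + 666*Q*n^2 + (2427/5)*Q*n + 18*n^5 + 75*n^4 + 180*n^3 + (485/2)*n^2 + (309/2)*n

private lemma a2c_sum2 (Q : ℚ) : ∀ n : ℕ,
    ∑ w ∈ Finset.range n,
      (Phi (3*Q - 3*(w:ℚ)) (2*(w:ℚ) + 3) + Phi (3*Q - 3*(w:ℚ) - 1) (2*(w:ℚ) + 3) + Phi (3*Q - 3*(w:ℚ) + 1) (2*(w:ℚ) + 2))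
    = Cp2 Q n := by
  intro n
  induction n with
  | zero => simp only [Finset.range_zero, Finset.sum_empty, Nat.cast_zero, Cp2]; ring
  | succ m ih =>
      rw [Finset.sum_range_succ, ih]
      simp only [Cp2, Phi]
      push_cast
      ring

private lemma a2c_row2 (q w : ℕ) (hw : w < q) :
    A (6*q+2) (3*(q-1-w)) + A (6*q+2) (3*(q-1-w)+1) + A (6*q+2) (3*(q-1-w)+2)
    = Phi (3*(q:ℚ) - 3*(w:ℚ)) (2*(w:ℚ) + 3) + Phi (3*(q:ℚ) - 3*(w:ℚ) - 1) (2*(w:ℚ) + 3) + Phi (3*(q:ℚ) - 3*(w:ℚ) + 1) (2*(w:ℚ) + 2) := by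
  rw [A_val (6*q+2) (3*(q-1-w)) (2*w+2) 2 (by norm_num) (by omega), A_val (6*q+2) (3*(q-1-w)+1) (2*w+2) 0 (by norm_num) (by omega), A_val (6*q+2) (3*(q-1-w)+2) (2*w+1) 1 (by norm_num) (by omega)]
  have hq : ((q - 1 - w : ℕ) : ℚ) = (q:ℚ) - 1 - (w:ℚ) := by
    have h1 : q - 1 - w = q - (w+1) := by omega
    rw [h1, Nat.cast_sub (by omega : w+1 ≤ q)]
    push_cast; ring
  simp only [Phi]
  push_cast [hq]
  ring

private lemma a2c_blk2 (q : ℕ) :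
    ∑ i ∈ Finset.range (3*q), A (6*q+2) i = Cp2 (q:ℚ) (q:ℚ) := by
  refine Eq.trans ?_ (a2c_sum2 (q:ℚ) q)
  rw [a2c_trip, ← Finset.sum_range_reflect]
  exact Finset.sum_congr rfl fun w hw => a2c_row2 q w (Finset.mem_range.mp hw)

private def Cp3 (Q n : ℚ) : ℚ := 108*Q^3*n^3 + 324*Q^3*n^2 + 351*Q^3*n + 324*Q^2*n^3 + 918*Q^2*n^2 + 945*Q^2*n + (108/5)*Q*n^5 + 108*Q*n^4 + 555*Q*n^3 + 1125*Q*n^2 + (4947/5)*Q*n + (108/5)*n^5 + 102*n^4 + 315*n^3 + 496*n^2 + (1867/5)*n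

private lemma a2c_sum3 (Q : ℚ) : ∀ n : ℕ,
    ∑ w ∈ Finset.range n,
      (Phi (3*Q - 3*(w:ℚ) - 2) (2*(w:ℚ) + 4) + Phi (3*Q - 3*(w:ℚ)) (2*(w:ℚ) + 3) + Phi (3*Q - 3*(w:ℚ) + 2) (2*(w:ℚ) + 2))
    = Cp3 Q n := by
  intro n
  induction n with
  | zero => simp only [Finset.range_zero, Finset.sum_empty, Nat.cast_zero, Cp3]; ring
  | succ m ih =>
      rw [Finset.sum_range_succ, ih]
      simp only [Cp3, Phi]
      push_cast
      ring

private lemma a2c_row3 (q w : ℕ) (hw : w < q) :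
    A (6*q+3) (3*(q-1-w)) + A (6*q+3) (3*(q-1-w)+1) + A (6*q+3) (3*(q-1-w)+2)
    = Phi (3*(q:ℚ) - 3*(w:ℚ) - 2) (2*(w:ℚ) + 4) + Phi (3*(q:ℚ) - 3*(w:ℚ)) (2*(w:ℚ) + 3) + Phi (3*(q:ℚ) - 3*(w:ℚ) + 2) (2*(w:ℚ) + 2) := by
  rw [A_val (6*q+3) (3*(q-1-w)) (2*w+3) 0 (by norm_num) (by omega), A_val (6*q+3) (3*(q-1-w)+1) (2*w+2) 1 (by norm_num) (by omega), A_val (6*q+3) (3*(q-1-w)+2) (2*w+1) 2 (by norm_num) (by omega)]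
  have hq : ((q - 1 - w : ℕ) : ℚ) = (q:ℚ) - 1 - (w:ℚ) := by
    have h1 : q - 1 - w = q - (w+1) := by omega
    rw [h1, Nat.cast_sub (by omega : w+1 ≤ q)]
    push_cast; ring
  simp only [Phi]
  push_cast [hq]
  ring

private lemma a2c_blk3 (q : ℕ) :
    ∑ i ∈ Finset.range (3*q), A (6*q+3) i = Cp3 (q:ℚ) (q:ℚ) := by
  refine Eq.trans ?_ (a2c_sum3 (q:ℚ) q)
  rw [a2c_trip, ← Finset.sum_range_reflect]
  exact Finset.sum_congr rfl fun w hw => a2c_row3 q w (Finset.mem_range.mp hw)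

private def Cp4 (Q n : ℚ) : ℚ := 108*Q^3*n^3 + 378*Q^3*n^2 + 432*Q^3*n + 378*Q^2*n^3 + 1323*Q^2*n^2 + 1512*Q^2*n + (108/5)*Q*n^5 + 126*Q*n^4 + 726*Q*n^3 + 1854*Q*n^2 + (9627/5)*Q*n + (126/5)*n^5 + 147*n^4 + 504*n^3 + (1925/2)*n^2 + (8743/10)*n

private lemma a2c_sum4 (Q : ℚ) : ∀ n : ℕ,
    ∑ w ∈ Finset.range n,
      (Phi (3*Q - 3*(w:ℚ) - 1) (2*(w:ℚ) + 4) + Phi (3*Q - 3*(w:ℚ) + 1) (2*(w:ℚ) + 3) + Phi (3*Q - 3*(w:ℚ)) (2*(w:ℚ) + 3))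
    = Cp4 Q n := by
  intro n
  induction n with
  | zero => simp only [Finset.range_zero, Finset.sum_empty, Nat.cast_zero, Cp4]; ring
  | succ m ih =>
      rw [Finset.sum_range_succ, ih]
      simp only [Cp4, Phi]
      push_cast
      ring

private lemma a2c_row4 (q w : ℕ) (hw : w < q) :
    A (6*q+4) (3*(q-1-w)) + A (6*q+4) (3*(q-1-w)+1) + A (6*q+4) (3*(q-1-w)+2)
    = Phi (3*(q:ℚ) - 3*(w:ℚ) - 1) (2*(w:ℚ) + 4) + Phi (3*(q:ℚ) - 3*(w:ℚ) + 1) (2*(w:ℚ) + 3) + Phi (3*(q:ℚ) - 3*(w:ℚ)) (2*(w:ℚ) + 3) := by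
  rw [A_val (6*q+4) (3*(q-1-w)) (2*w+3) 1 (by norm_num) (by omega), A_val (6*q+4) (3*(q-1-w)+1) (2*w+2) 2 (by norm_num) (by omega), A_val (6*q+4) (3*(q-1-w)+2) (2*w+2) 0 (by norm_num) (by omega)]
  have hq : ((q - 1 - w : ℕ) : ℚ) = (q:ℚ) - 1 - (w:ℚ) := by
    have h1 : q - 1 - w = q - (w+1) := by omega
    rw [h1, Nat.cast_sub (by omega : w+1 ≤ q)]
    push_cast; ring
  simp only [Phi]
  push_cast [hq]
  ring

private lemma a2c_blk4 (q : ℕ) :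
    ∑ i ∈ Finset.range (3*q), A (6*q+4) i = Cp4 (q:ℚ) (q:ℚ) := by
  refine Eq.trans ?_ (a2c_sum4 (q:ℚ) q)
  rw [a2c_trip, ← Finset.sum_range_reflect]
  exact Finset.sum_congr rfl fun w hw => a2c_row4 q w (Finset.mem_range.mp hw)

private def Cp5 (Q n : ℚ) : ℚ := 108*Q^3*n^3 + 432*Q^3*n^2 + 567*Q^3*n + 432*Q^2*n^3 + 1728*Q^2*n^2 + 2268*Q^2*n + (108/5)*Q*n^5 + 144*Q*n^4 + 951*Q*n^3 + 2781*Q*n^2 + (16602/5)*Q*n + (144/5)*n^5 + 192*n^4 + 756*n^3 + 1660*n^2 + (8696/5)*n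

private lemma a2c_sum5 (Q : ℚ) : ∀ n : ℕ,
    ∑ w ∈ Finset.range n,
      (Phi (3*Q - 3*(w:ℚ)) (2*(w:ℚ) + 4) + Phi (3*Q - 3*(w:ℚ) - 1) (2*(w:ℚ) + 4) + Phi (3*Q - 3*(w:ℚ) + 1) (2*(w:ℚ) + 3))
    = Cp5 Q n := by
  intro n
  induction n with
  | zero => simp only [Finset.range_zero, Finset.sum_empty, Nat.cast_zero, Cp5]; ring
  | succ m ih =>
      rw [Finset.sum_range_succ, ih]
      simp only [Cp5, Phi]
      push_cast
      ring

private lemma a2c_row5 (q w : ℕ) (hw : w < q) :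
    A (6*q+5) (3*(q-1-w)) + A (6*q+5) (3*(q-1-w)+1) + A (6*q+5) (3*(q-1-w)+2)
    = Phi (3*(q:ℚ) - 3*(w:ℚ)) (2*(w:ℚ) + 4) + Phi (3*(q:ℚ) - 3*(w:ℚ) - 1) (2*(w:ℚ) + 4) + Phi (3*(q:ℚ) - 3*(w:ℚ) + 1) (2*(w:ℚ) + 3) := by
  rw [A_val (6*q+5) (3*(q-1-w)) (2*w+3) 2 (by norm_num) (by omega), A_val (6*q+5) (3*(q-1-w)+1) (2*w+3) 0 (by norm_num) (by omega), A_val (6*q+5) (3*(q-1-w)+2) (2*w+2) 1 (by norm_num) (by omega)]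
  have hq : ((q - 1 - w : ℕ) : ℚ) = (q:ℚ) - 1 - (w:ℚ) := by
    have h1 : q - 1 - w = q - (w+1) := by omega
    rw [h1, Nat.cast_sub (by omega : w+1 ≤ q)]
    push_cast; ring
  simp only [Phi]
  push_cast [hq]
  ring

private lemma a2c_blk5 (q : ℕ) :
    ∑ i ∈ Finset.range (3*q), A (6*q+5) i = Cp5 (q:ℚ) (q:ℚ) := by
  refine Eq.trans ?_ (a2c_sum5 (q:ℚ) q)
  rw [a2c_trip, ← Finset.sum_range_reflect]
  exact Finset.sum_congr rfl fun w hw => a2c_row5 q w (Finset.mem_range.mp hw)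

theorem sum_card_A2_crystals (l : ℕ) (hl : 0 < l) :
    ∑ i ∈ Finset.range (l / 2 + 1),
      ∑ j0 ∈ (Finset.Icc i (l - i)).filter (fun j0 => j0 % 3 = (l - i) % 3),
        ∑ j1 ∈ (Finset.Icc i (l - i)).filter (fun j1 => j1 % 3 = (l - i) % 3),
          ((1 + j0) * (1 + j1) * (2 + j0 + j1) : ℚ) / 2
      = ((l + 1) * (l + 2) * (l + 3) ^ 2 * (l + 4) * (l + 5) : ℚ) / 360 := by
  show ∑ i ∈ Finset.range (l / 2 + 1), A l i
      = ((l + 1) * (l + 2) * (l + 3) ^ 2 * (l + 4) * (l + 5) : ℚ) / 360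
  obtain ⟨q, s, hs, rfl⟩ : ∃ q s, s < 6 ∧ l = 6*q + s := ⟨l/6, l%6, by omega, by omega⟩
  interval_cases s

  · rw [show (6*q+0)/2+1 = 3*q+1 from by omega, Finset.sum_range_succ, a2c_blk0 q,
        A_val (6*q+0) (3*q) 0 0 (by norm_num) (by omega)]
    simp only [Cp0, Phi]
    push_cast
    ring

  · rw [show (6*q+1)/2+1 = 3*q+1 from by omega, Finset.sum_range_succ, a2c_blk1 q,
        A_val (6*q+1) (3*q) 0 1 (by norm_num) (by omega)]
    simp only [Cp1, Phi]
    push_cast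
    ring

  · rw [show (6*q+2)/2+1 = 3*q+1+1 from by omega, Finset.sum_range_succ, Finset.sum_range_succ, a2c_blk2 q,
        A_val (6*q+2) (3*q) 0 2 (by norm_num) (by omega), A_val (6*q+2) (3*q+1) 0 0 (by norm_num) (by omega)]
    simp only [Cp2, Phi]
    push_cast
    ring

  · rw [show (6*q+3)/2+1 = 3*q+1+1 from by omega, Finset.sum_range_succ, Finset.sum_range_succ, a2c_blk3 q,
        A_val (6*q+3) (3*q) 1 0 (by norm_num) (by omega), A_val (6*q+3) (3*q+1) 0 1 (by norm_num) (by omega)]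
    simp only [Cp3, Phi]
    push_cast
    ring

  · rw [show (6*q+4)/2+1 = 3*q+1+1+1 from by omega, Finset.sum_range_succ, Finset.sum_range_succ, Finset.sum_range_succ, a2c_blk4 q,
        A_val (6*q+4) (3*q) 1 1 (by norm_num) (by omega), A_val (6*q+4) (3*q+1) 0 2 (by norm_num) (by omega), A_val (6*q+4) (3*q+2) 0 0 (by norm_num) (by omega)]
    simp only [Cp4, Phi]
    push_cast
    ring

  · rw [show (6*q+5)/2+1 = 3*q+1+1+1 from by omega, Finset.sum_range_succ, Finset.sum_range_succ, Finset.sum_range_succ, a2c_blk5 q,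
        A_val (6*q+5) (3*q) 1 2 (by norm_num) (by omega), A_val (6*q+5) (3*q+1) 1 0 (by norm_num) (by omega), A_val (6*q+5) (3*q+2) 0 1 (by norm_num) (by omega)]
    simp only [Cp5, Phi]
    push_cast
    ring
end

section
/- For every positive integer $l$, the number of tuples $(x_1,x_2,x_3,\bar x_3,\bar x_2,\bar x_1)$ of nonnegative integers satisfying $x_3\equiv\bar x_3\pmod 2$ and $x_1+x_2+(x_3+\bar x_3)/2+\bar x_2+\bar x_1\le l$ equals $\binom{l+6}{6}+\binom{l+5}{6}=\frac{(l+1)(l+2)(l+3)^2(l+4)(l+5)}{360}$. -/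
open Finset

private lemma nat_card_sigma {n : ℕ} (f : Fin n → Type*) [∀ i, Finite (f i)] :
    Nat.card (Σ i, f i) = ∑ i, Nat.card (f i) := by
  haveI : ∀ i, Fintype (f i) := fun i => Fintype.ofFinite _
  simp [Nat.card_eq_fintype_card, Fintype.card_sigma]

private lemma sumS (k n : ℕ) :
    ∑ s ∈ range (n+1), (s+k).choose k = (n+k+1).choose (k+1) := by
  induction n with
  | zero => simp
  | succ n ih =>
      rw [Finset.sum_range_succ, ih]
      have h := Nat.choose_succ_succ (n+k+1) k
      simp only [Nat.succ_eq_add_one] at h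
      simp only [show n+1+k = n+k+1 by ring, show n+1+k+1 = n+k+1+1 by ring]
      omega

private lemma sumS' (k n : ℕ) :
    ∑ s ∈ range (n+1), (s+k).choose (k+1) = (n+k+1).choose (k+2) := by
  induction n with
  | zero => simp
  | succ n ih =>
      rw [Finset.sum_range_succ, ih]
      have h := Nat.choose_succ_succ (n+k+1) (k+1)
      simp only [Nat.succ_eq_add_one] at h
      simp only [show n+1+k = n+k+1 by ring, show n+1+k+1 = n+k+1+1 by ring,
        show k+2 = k+1+1 by ring]
      omega

private def stepEquiv {α : Type*} (w : α → ℕ) (n : ℕ) :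
    {p : ℕ × α // p.1 + w p.2 ≤ n} ≃ Σ t : Fin (n+1), {a : α // w a ≤ n - t.1} where
  toFun p := ⟨⟨p.1.1, by have := p.2; omega⟩,
    ⟨p.1.2, by show w p.1.2 ≤ n - p.1.1; have := p.2; omega⟩⟩
  invFun q := ⟨(q.1.1, q.2.1), by
    show q.1.1 + w q.2.1 ≤ n
    have h1 := q.2.2; have h2 := q.1.2; omega⟩
  left_inv p := rfl
  right_inv q := rfl

private lemma step {α : Type*} (w : α → ℕ) (f : ℕ → ℕ)
    (hfin : ∀ m, Finite {a : α // w a ≤ m})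
    (h : ∀ m, Nat.card {a : α // w a ≤ m} = f m) (n : ℕ) :
    Nat.card {p : ℕ × α // p.1 + w p.2 ≤ n} = ∑ s ∈ range (n+1), f s := by
  rw [Nat.card_congr (stepEquiv w n), nat_card_sigma]
  rw [Fin.sum_univ_eq_sum_range (fun t => Nat.card {a : α // w a ≤ n - t})]
  rw [← Finset.sum_range_reflect]
  refine Finset.sum_congr rfl fun t ht => ?_
  rw [h]
  congr 1
  simp at ht
  omega

private lemma stepFin {α : Type*} (w : α → ℕ)
    (hfin : ∀ m, Finite {a : α // w a ≤ m}) (n : ℕ) :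
    Finite {p : ℕ × α // p.1 + w p.2 ≤ n} := by
  haveI := hfin n
  refine Finite.of_injective
    (fun p : {p : ℕ × α // p.1 + w p.2 ≤ n} =>
      ((⟨p.1.1, by have := p.2; omega⟩ : Fin (n+1)),
        (⟨p.1.2, by have := p.2; omega⟩ : {a : α // w a ≤ n}))) ?_
  rintro ⟨⟨a, b⟩, h1⟩ ⟨⟨c, d⟩, h2⟩ h
  simp only [Prod.mk.injEq, Fin.mk.injEq, Subtype.mk.injEq] at h
  obtain ⟨rfl, rfl⟩ := h
  rfl

/-- the parity pair component -/
private def PP : Type := {q : ℕ × ℕ // q.1 % 2 = q.2 % 2}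

private def wPP (q : PP) : ℕ := (q.1.1 + q.1.2) / 2

private lemma ppFin (m : ℕ) : Finite {a : PP // wPP a ≤ m} := by
  refine Finite.of_injective
    (fun a : {a : PP // wPP a ≤ m} =>
      ((⟨a.1.1.1, (by have h1 : wPP a.1 ≤ m := a.2; have := a.1.2; unfold wPP at h1; omega)⟩ : Fin (2*m+1)),
        (⟨a.1.1.2, (by have h1 : wPP a.1 ≤ m := a.2; have := a.1.2; unfold wPP at h1; omega)⟩ : Fin (2*m+1)))) ?_
  rintro ⟨⟨⟨a, b⟩, h1⟩, h1'⟩ ⟨⟨⟨c, d⟩, h2⟩, h2'⟩ h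
  simp only [Prod.mk.injEq, Fin.mk.injEq] at h
  obtain ⟨rfl, rfl⟩ := h
  rfl

private def ppEquiv (m : ℕ) :
    {a : PP // wPP a ≤ m} ≃
      {p : ℕ × ℕ // p.1 + p.2 ≤ m} ⊕ {p : ℕ × ℕ // p.1 + p.2 < m} where
  toFun a :=
    if h : a.1.1.1 % 2 = 0 then
      Sum.inl ⟨(a.1.1.1 / 2, a.1.1.2 / 2), by
        have h1 : wPP a.1 ≤ m := a.2; have := a.1.2; unfold wPP at h1; omega⟩
    else
      Sum.inr ⟨(a.1.1.1 / 2, a.1.1.2 / 2), by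
        have h1 : wPP a.1 ≤ m := a.2; have := a.1.2; unfold wPP at h1; omega⟩
  invFun q :=
    match q with
    | Sum.inl p => ⟨⟨(2 * p.1.1, 2 * p.1.2), by omega⟩, by
        show (2 * p.1.1 + 2 * p.1.2) / 2 ≤ m; have := p.2; omega⟩
    | Sum.inr p => ⟨⟨(2 * p.1.1 + 1, 2 * p.1.2 + 1), by omega⟩, by
        show (2 * p.1.1 + 1 + (2 * p.1.2 + 1)) / 2 ≤ m; have := p.2; omega⟩
  left_inv a := by
    obtain ⟨⟨⟨x, y⟩, hp⟩, hw⟩ := a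
    dsimp only at hp ⊢
    by_cases h : x % 2 = 0
    · rw [dif_pos h]
      apply Subtype.ext; apply Subtype.ext
      dsimp only
      congr 1 <;> omega
    · rw [dif_neg h]
      apply Subtype.ext; apply Subtype.ext
      dsimp only
      congr 1 <;> omega
  right_inv q := by
    rcases q with ⟨⟨x, y⟩, h⟩ | ⟨⟨x, y⟩, h⟩ <;> dsimp only
    · rw [dif_pos (by omega)]
      apply congrArg; apply Subtype.ext
      dsimp only
      congr 1 <;> omega
    · rw [dif_neg (by omega)]
      apply congrArg; apply Subtype.ext
      dsimp only
      congr 1 <;> omega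

private lemma pairFin (m : ℕ) : Finite {p : ℕ × ℕ // p.1 + p.2 ≤ m} := by
  refine Finite.of_injective
    (fun p : {p : ℕ × ℕ // p.1 + p.2 ≤ m} =>
      ((⟨p.1.1, by have := p.2; omega⟩ : Fin (m+1)),
        (⟨p.1.2, by have := p.2; omega⟩ : Fin (m+1)))) ?_
  rintro ⟨⟨a, b⟩, h1⟩ ⟨⟨c, d⟩, h2⟩ h
  simp only [Prod.mk.injEq, Fin.mk.injEq] at h
  obtain ⟨rfl, rfl⟩ := h
  rfl

private lemma natLeFin (m : ℕ) : Finite {a : ℕ // a ≤ m} :=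
  Finite.of_injective (fun a : {a : ℕ // a ≤ m} => (⟨a.1, by omega⟩ : Fin (m+1)))
    (by rintro ⟨a, _⟩ ⟨b, _⟩ h; simp only [Fin.mk.injEq] at h; exact Subtype.ext h)

private lemma cardNatLe (m : ℕ) : Nat.card {a : ℕ // a ≤ m} = m + 1 := by
  have e : {a : ℕ // a ≤ m} ≃ Fin (m+1) :=
    ⟨fun a => ⟨a.1, by omega⟩, fun a => ⟨a.1, by omega⟩,
      fun a => rfl, fun a => rfl⟩
  rw [Nat.card_congr e, Nat.card_eq_fintype_card, Fintype.card_fin]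

private lemma cardPair (m : ℕ) : Nat.card {p : ℕ × ℕ // p.1 + p.2 ≤ m} = (m+2).choose 2 := by
  rw [step (fun a : ℕ => a) (fun s => s + 1) natLeFin cardNatLe m]
  calc ∑ s ∈ range (m+1), (s+1) = ∑ s ∈ range (m+1), (s+1).choose 1 := by simp
    _ = (m+2).choose 2 := by simpa using sumS 1 m

private lemma cardPairLt (m : ℕ) : Nat.card {p : ℕ × ℕ // p.1 + p.2 < m} = (m+1).choose 2 := by
  cases m with
  | zero =>
      haveI : IsEmpty {p : ℕ × ℕ // p.1 + p.2 < 0} := ⟨fun p => by have := p.2; omega⟩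
      simp [Nat.card_of_isEmpty]
  | succ m =>
      have e : {p : ℕ × ℕ // p.1 + p.2 < m + 1} ≃ {p : ℕ × ℕ // p.1 + p.2 ≤ m} :=
        Equiv.subtypeEquiv (Equiv.refl _) (fun p => by simp [Nat.lt_succ_iff])
      rw [Nat.card_congr e, cardPair]

private lemma cardPP (m : ℕ) :
    Nat.card {a : PP // wPP a ≤ m} = (m+2).choose 2 + (m+1).choose 2 := by
  rw [Nat.card_congr (ppEquiv m)]
  haveI := pairFin m
  haveI : Finite {p : ℕ × ℕ // p.1 + p.2 < m} := by
    refine Finite.of_injective (fun p : {p : ℕ × ℕ // p.1 + p.2 < m} =>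
      (⟨p.1, by have := p.2; omega⟩ : {p : ℕ × ℕ // p.1 + p.2 ≤ m})) ?_
    rintro ⟨a, _⟩ ⟨b, _⟩ h
    simp only [Subtype.mk.injEq] at h
    exact Subtype.ext h
  rw [Nat.card_sum, cardPair, cardPairLt]

private lemma sum2 (k n : ℕ) :
    ∑ s ∈ range (n+1), ((s+k+1).choose (k+1) + (s+k).choose (k+1))
      = (n+k+2).choose (k+2) + (n+k+1).choose (k+2) := by
  induction n with
  | zero => simp
  | succ n ih =>
      rw [Finset.sum_range_succ, ih]
      have h1 := Nat.choose_succ_succ (n+k+2) (k+1)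
      have h2 := Nat.choose_succ_succ (n+k+1) (k+1)
      simp only [Nat.succ_eq_add_one] at h1 h2
      simp only [show n+1+k = n+k+1 by ring, show n+1+k+1 = n+k+2 by ring,
        show n+1+k+2 = n+k+2+1 by ring, show n+k+1+1 = n+k+2 by ring,
        show n+k+1+2 = n+k+2+1 by ring, show k+2 = k+1+1 by ring] at *
      omega

private lemma stepk {α : Type*} (w : α → ℕ)
    (hfin : ∀ m, Finite {a : α // w a ≤ m}) (k : ℕ)
    (h : ∀ m, Nat.card {a : α // w a ≤ m}
        = (m+k+1).choose (k+1) + (m+k).choose (k+1)) (n : ℕ) :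
    Nat.card {p : ℕ × α // p.1 + w p.2 ≤ n}
      = (n+k+2).choose (k+2) + (n+k+1).choose (k+2) := by
  rw [step w _ hfin h n, sum2 k n]

private def w2 : ℕ × PP → ℕ := fun p => p.1 + wPP p.2
private def w3 : ℕ × (ℕ × PP) → ℕ := fun p => p.1 + w2 p.2
private def w4 : ℕ × (ℕ × (ℕ × PP)) → ℕ := fun p => p.1 + w3 p.2

private lemma fin2 (m : ℕ) : Finite {a : ℕ × PP // w2 a ≤ m} := stepFin wPP ppFin m
private lemma fin3 (m : ℕ) : Finite {a : ℕ × (ℕ × PP) // w3 a ≤ m} := stepFin w2 fin2 m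
private lemma fin4 (m : ℕ) : Finite {a : ℕ × (ℕ × (ℕ × PP)) // w4 a ≤ m} := stepFin w3 fin3 m

private lemma card2 (m : ℕ) :
    Nat.card {a : ℕ × PP // w2 a ≤ m} = (m+1+2).choose (1+2) + (m+1+1).choose (1+2) :=
  stepk wPP ppFin 1 (fun m' => cardPP m') m

private lemma card3 (m : ℕ) :
    Nat.card {a : ℕ × (ℕ × PP) // w3 a ≤ m} = (m+2+2).choose (2+2) + (m+2+1).choose (2+2) :=
  stepk w2 fin2 2 (fun m' => card2 m') m

private lemma card4 (m : ℕ) :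
    Nat.card {a : ℕ × (ℕ × (ℕ × PP)) // w4 a ≤ m}
      = (m+3+2).choose (3+2) + (m+3+1).choose (3+2) :=
  stepk w3 fin3 3 (fun m' => card3 m') m

private lemma card5 (m : ℕ) :
    Nat.card {p : ℕ × (ℕ × (ℕ × (ℕ × PP))) // p.1 + w4 p.2 ≤ m}
      = (m+6).choose 6 + (m+5).choose 6 :=
  stepk w4 fin4 4 (fun m' => card4 m') m

private def mainEquiv (l : ℕ) :
    {b : ℕ × ℕ × ℕ × ℕ × ℕ × ℕ //
        b.2.2.1 % 2 = b.2.2.2.1 % 2 ∧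
        b.1 + b.2.1 + (b.2.2.1 + b.2.2.2.1) / 2 + b.2.2.2.2.1 + b.2.2.2.2.2 ≤ l}
      ≃ {p : ℕ × (ℕ × (ℕ × (ℕ × PP))) // p.1 + w4 p.2 ≤ l} where
  toFun b := ⟨(b.1.1, b.1.2.1, b.1.2.2.2.2.1, b.1.2.2.2.2.2,
      (⟨(b.1.2.2.1, b.1.2.2.2.1), b.2.1⟩ : PP)), by
    obtain ⟨⟨x1, x2, x3, y3, y2, y1⟩, hp, hw⟩ := b
    dsimp only at hw
    show x1 + (x2 + (y2 + (y1 + (x3 + y3) / 2))) ≤ l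
    omega⟩
  invFun q := ⟨(q.1.1, q.1.2.1, q.1.2.2.2.2.1.1, q.1.2.2.2.2.1.2,
      q.1.2.2.1, q.1.2.2.2.1), by
    obtain ⟨⟨x1, x2, y2, y1, ⟨⟨x3, y3⟩, hp⟩⟩, hw⟩ := q
    refine ⟨hp, ?_⟩
    have h : x1 + (x2 + (y2 + (y1 + (x3 + y3) / 2))) ≤ l := hw
    show x1 + x2 + (x3 + y3) / 2 + y2 + y1 ≤ l
    omega⟩
  left_inv b := rfl
  right_inv q := rfl

private lemma chooseCast (n : ℕ) :
    ((n+6).choose 6 : ℚ)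
      = ((n:ℚ)+1) * ((n:ℚ)+2) * ((n:ℚ)+3) * ((n:ℚ)+4) * ((n:ℚ)+5) * ((n:ℚ)+6) / 720 := by
  rw [Nat.cast_choose ℚ (by omega : 6 ≤ n + 6)]
  have h : n + 6 - 6 = n := by omega
  rw [h]
  have e : Nat.factorial (n+6)
      = (n+6) * ((n+5) * ((n+4) * ((n+3) * ((n+2) * ((n+1) * Nat.factorial n))))) := rfl
  rw [e]
  have hn : ((Nat.factorial n : ℕ) : ℚ) ≠ 0 := by
    exact_mod_cast Nat.cast_ne_zero.mpr (Nat.factorial_ne_zero n)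
  have h6 : ((Nat.factorial 6 : ℕ) : ℚ) = 720 := by norm_num [Nat.factorial]
  push_cast
  rw [h6]
  field_simp

/-- The number of elements of the `D₄⁽³⁾` crystal `B_l` in its coordinate
parametrization: tuples `(x₁,x₂,x₃,x̄₃,x̄₂,x̄₁)` of nonnegative integers with
`x₃ ≡ x̄₃ (mod 2)` and `x₁+x₂+(x₃+x̄₃)/2+x̄₂+x̄₁ ≤ l`. -/
theorem card_B_l (l : ℕ) (hl : 0 < l) :
    Nat.card {b : ℕ × ℕ × ℕ × ℕ × ℕ × ℕ //
        b.2.2.1 % 2 = b.2.2.2.1 % 2 ∧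
        b.1 + b.2.1 + (b.2.2.1 + b.2.2.2.1) / 2 + b.2.2.2.2.1 + b.2.2.2.2.2 ≤ l}
      = Nat.choose (l + 6) 6 + Nat.choose (l + 5) 6 ∧
    ((Nat.choose (l + 6) 6 + Nat.choose (l + 5) 6 : ℚ)
      = ((l + 1) * (l + 2) * (l + 3) ^ 2 * (l + 4) * (l + 5) : ℚ) / 360) := by
  constructor
  · rw [Nat.card_congr (mainEquiv l), card5 l]
  · obtain ⟨m, rfl⟩ := Nat.exists_eq_succ_of_ne_zero (Nat.pos_iff_ne_zero.mp hl)
    simp only [Nat.succ_eq_add_one, show m+1+6 = m+7 by ring, show m+1+5 = m+6 by ring]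
    have h1 := chooseCast (m+1)
    have h2 := chooseCast m
    simp only [show m+1+6 = m+7 by ring, Nat.cast_add, Nat.cast_one] at h1
    rw [h1, h2]
    push_cast
    field_simp
    ring
end

section
/- In the $A_2$ crystal $B^{A_2}(j_0\Lambda_0+j_1\Lambda_1)$ parametrized by $t(p,q,r)$ with $0\le p\le j_0$, $p\le q\le j_1+p$, $0\le r\le j_0-2p+q$ and crystal operators given by the explicit case rules (\ref{A2 e0})–(\ref{A2 f1}), the lowest weight vector (the unique element killed by all $\tilde f_i$, $i=0,1$) is $t(j_0,j_0+j_1,j_1)$, and for all admissible $(p,q,r)$ one has $t(p,q,r)=\tilde e_0^{r'}\tilde e_1^{q'}\tilde e_0^{p'}\,t(j_0,j_0+j_1,j_1)$, where $p'=j_1-q+p$, $q'=j_0+j_1-q$, $r'=j_0+q-2p-r$. -/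
/-- The parametrizing set of the `A₂` crystal `B^{A₂}(j₀Λ₀+j₁Λ₁)`:
`t(p,q,r)` with `0 ≤ p ≤ j₀`, `p ≤ q ≤ j₁+p`, `0 ≤ r ≤ j₀-2p+q`. -/
def TA (j0 j1 : ℕ) : Set (ℕ × ℕ × ℕ) :=
  {x | x.1 ≤ j0 ∧ x.1 ≤ x.2.1 ∧ x.2.1 ≤ j1 + x.1 ∧ x.2.2 + 2 * x.1 ≤ j0 + x.2.1}

def e0A : ℕ × ℕ × ℕ → Option (ℕ × ℕ × ℕ)
  | (p, q, r) => if 0 < r then some (p, q, r - 1) else none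

def f0A (j0 : ℕ) : ℕ × ℕ × ℕ → Option (ℕ × ℕ × ℕ)
  | (p, q, r) => if r + 2 * p < j0 + q then some (p, q, r + 1) else none

def e1A : ℕ × ℕ × ℕ → Option (ℕ × ℕ × ℕ)
  | (p, q, r) =>
    if 0 < p ∧ q ≤ p + r then some (p - 1, q - 1, r + 1)
    else if p + r < q then some (p, q - 1, r)
    else none

def f1A (j1 : ℕ) : ℕ × ℕ × ℕ → Option (ℕ × ℕ × ℕ)
  | (p, q, r) =>
    if p ≤ q ∧ q < p + r then some (p + 1, q + 1, r - 1)
    else if p + r ≤ q ∧ q < j1 + p then some (p, q + 1, r)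
    else none

lemma e0_iter (k : ℕ) : ∀ p q r : ℕ, k ≤ r →
    (fun o => Option.bind o e0A)^[k] (some (p, q, r)) = some (p, q, r - k) := by
  induction k with
  | zero => intro p q r _; simp
  | succ n ih =>
    intro p q r h
    rw [Function.iterate_succ_apply]
    have h1 : e0A (p, q, r) = some (p, q, r - 1) := by
      simp only [e0A]; rw [if_pos (by omega)]
    simp only [Option.bind_some, h1]
    rw [ih p q (r - 1) (by omega)]
    simp only [Option.some_inj, Prod.mk.injEq, true_and, and_true]
    omega

lemma e1_iter_b (k : ℕ) : ∀ p q r : ℕ, p + r + k ≤ q →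
    (fun o => Option.bind o e1A)^[k] (some (p, q, r)) = some (p, q - k, r) := by
  induction k with
  | zero => intro p q r _; simp
  | succ n ih =>
    intro p q r h
    rw [Function.iterate_succ_apply]
    have h1 : e1A (p, q, r) = some (p, q - 1, r) := by
      simp only [e1A]
      rw [if_neg (by omega), if_pos (by omega)]
    simp only [Option.bind_some, h1]
    rw [ih p (q - 1) r (by omega)]
    simp only [Option.some_inj, Prod.mk.injEq, true_and, and_true]
    omega

lemma e1_iter_a (k : ℕ) : ∀ p q r : ℕ, k ≤ p → q ≤ p + r →
    (fun o => Option.bind o e1A)^[k] (some (p, q, r)) = some (p - k, q - k, r + k) := by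
  induction k with
  | zero => intro p q r _ _; simp
  | succ n ih =>
    intro p q r hk h
    rw [Function.iterate_succ_apply]
    have h1 : e1A (p, q, r) = some (p - 1, q - 1, r + 1) := by
      simp only [e1A]
      rw [if_pos (by omega)]
    simp only [Option.bind_some, h1]
    rw [ih (p - 1) (q - 1) (r + 1) (by omega) (by omega)]
    simp only [Option.some_inj, Prod.mk.injEq]
    omega

/-- The lowest weight vector of `B^{A₂}(j₀Λ₀+j₁Λ₁)` is `t(j₀,j₀+j₁,j₁)`, and every
element `t(p,q,r)` equals `ẽ₀^{r'} ẽ₁^{q'} ẽ₀^{p'} t(j₀,j₀+j₁,j₁)` with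
`p' = j₁-q+p`, `q' = j₀+j₁-q`, `r' = j₀+q-2p-r`. -/
theorem A2_lowest_weight (j0 j1 : ℕ) :
    (j0, j0 + j1, j1) ∈ TA j0 j1 ∧
    f0A j0 (j0, j0 + j1, j1) = none ∧ f1A j1 (j0, j0 + j1, j1) = none ∧
    (∀ x ∈ TA j0 j1, f0A j0 x = none → f1A j1 x = none → x = (j0, j0 + j1, j1)) ∧
    (∀ p q r : ℕ, (p, q, r) ∈ TA j0 j1 →
      (fun o => Option.bind o e0A)^[j0 + q - 2 * p - r]
        ((fun o => Option.bind o e1A)^[j0 + j1 - q]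
          ((fun o => Option.bind o e0A)^[j1 + p - q] (some (j0, j0 + j1, j1))))
        = some (p, q, r)) := by
  refine ⟨?_, ?_, ?_, ?_, ?_⟩
  · simp only [TA, Set.mem_setOf_eq]; omega
  · simp only [f0A]; rw [if_neg (by omega)]
  · simp only [f1A]; rw [if_neg (by omega), if_neg (by omega)]
  · rintro ⟨p, q, r⟩ hx hf0 hf1
    simp only [TA, Set.mem_setOf_eq] at hx
    obtain ⟨h1, h2, h3, h4⟩ := hx
    simp only [f0A, ite_eq_right_iff] at hf0
    have hr : ¬ (r + 2 * p < j0 + q) := fun h => by simpa using hf0 h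
    simp only [f1A] at hf1
    by_cases c1 : p ≤ q ∧ q < p + r
    · rw [if_pos c1] at hf1; simp at hf1
    rw [if_neg c1] at hf1
    by_cases c2 : p + r ≤ q ∧ q < j1 + p
    · rw [if_pos c2] at hf1; simp at hf1
    have : p = j0 ∧ q = j0 + j1 ∧ r = j1 := by omega
    simp [this.1, this.2.1, this.2.2]
  · intro p q r hx
    simp only [TA, Set.mem_setOf_eq] at hx
    obtain ⟨h1, h2, h3, h4⟩ := hx
    rw [e0_iter _ _ _ _ (by omega)]
    have hq : j1 - (j1 + p - q) = q - p := by omega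
    rw [hq]
    have hsplit : j0 + j1 - q = (j0 - p) + (j1 + p - q) := by omega
    rw [hsplit, Function.iterate_add_apply]
    rw [e1_iter_b _ _ _ _ (by omega)]
    have hq2 : j0 + j1 - (j1 + p - q) = j0 + q - p := by omega
    rw [hq2]
    rw [e1_iter_a _ _ _ _ (by omega) (by omega)]
    have h1' : j0 - (j0 - p) = p := by omega
    have h2' : j0 + q - p - (j0 - p) = q := by omega
    rw [h1', h2']
    rw [e0_iter _ _ _ _ (by omega)]
    simp only [Option.some_inj, Prod.mk.injEq, true_and, and_true]
    omega
end

section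
/- In the crystal $T(j_0,j_1)$ with operators as specified, for all admissible $(p,q,r)$ and $i\in\{0,1\}$: $\tilde f_i t(p,q,r)=t(p',q',r')$ implies $\tilde e_i t(p',q',r')=t(p,q,r)$, and conversely $\tilde e_i t(p,q,r)=t(p',q',r')$ implies $\tilde f_i t(p',q',r')=t(p,q,r)$. -/
/-- On the `A₂` crystal, `f̃ᵢ x = y` iff `ẽᵢ y = x` (for `i = 0, 1`). -/
theorem A2_ef_inverse (j0 j1 : ℕ) (x : ℕ × ℕ × ℕ) (hx : x ∈ TA j0 j1) :
    (∀ y, f0A j0 x = some y → e0A y = some x) ∧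
    (∀ y, e0A x = some y → f0A j0 y = some x) ∧
    (∀ y, f1A j1 x = some y → e1A y = some x) ∧
    (∀ y, e1A x = some y → f1A j1 y = some x) := by
  obtain ⟨p, q, r⟩ := x
  simp only [TA, Set.mem_setOf_eq] at hx
  obtain ⟨h1, h2, h3, h4⟩ := hx
  refine ⟨?_, ?_, ?_, ?_⟩ <;> rintro ⟨a, b, c⟩ h <;>
    simp only [e0A, f0A, e1A, f1A] at h <;>
    split_ifs at h with h5 h6 <;>
    simp only [Option.some.injEq, Prod.mk.injEq] at h <;>
    obtain ⟨rfl, rfl, rfl⟩ := h <;>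
    simp only [e0A, f0A, e1A, f1A] <;>
    split_ifs with h7 h8
  all_goals try simp only [Option.some.injEq, Prod.mk.injEq, true_and, and_true]
  all_goals omega
end
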